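/- Let γ₀, γ₁ : ℝ → ℝ be continuous with γᵢ > -2, with γᵢ² + 4γᵢ integrable and ∫_ℝ (γᵢ(x)² + 4γᵢ(x)) dx = 0 for i = 0,1. Set γ(t) = (1−t)γ₀ + tγ₁. Then ∫_ℝ (γ(t,x)² + 4γ(t,x)) dx = (t² − t)∫_ℝ (γ₁(x) − γ₀(x))² dx ≤ 0 for t ∈ [0,1]. -/
import Mathlib


open MeasureTheory

lemma aux_int (γ : ℝ → ℝ) (hc : Continuous γ) (hγ : ∀ x, γ x > -2)
    (hint : Integrable (fun x => γ x ^ 2 + 4 * γ x)) :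
    Integrable γ ∧ Integrable (fun x => γ x ^ 2) := by
  have h1 : Integrable γ := by
    refine Integrable.mono' (hint.abs.const_mul (1/2)) hc.aestronglyMeasurable ?_
    filter_upwards with x
    have h4 : γ x + 4 > 2 := by linarith [hγ x]
    have : |γ x| * 2 ≤ |γ x| * (γ x + 4) := by
      apply mul_le_mul_of_nonneg_left (by linarith) (abs_nonneg _)
    have heq : γ x ^ 2 + 4 * γ x = γ x * (γ x + 4) := by ring
    rw [Real.norm_eq_abs, heq, abs_mul, abs_of_pos (by linarith : (0:ℝ) < γ x + 4)]
    linarith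
  have h2 : Integrable (fun x => γ x ^ 2) := by
    have : (fun x => γ x ^ 2) = fun x => (γ x ^ 2 + 4 * γ x) - 4 * γ x := by
      funext x; ring
    rw [this]
    exact hint.sub (h1.const_mul 4)
  exact ⟨h1, h2⟩

theorem shift_along_geodesic (γ₀ γ₁ : ℝ → ℝ)
    (hγ₀c : Continuous γ₀) (hγ₁c : Continuous γ₁)
    (hγ₀ : ∀ x, γ₀ x > -2) (hγ₁ : ∀ x, γ₁ x > -2)
    (hint₀ : Integrable (fun x => γ₀ x ^ 2 + 4 * γ₀ x))
    (hint₁ : Integrable (fun x => γ₁ x ^ 2 + 4 * γ₁ x))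
    (hz₀ : ∫ x, (γ₀ x ^ 2 + 4 * γ₀ x) = 0)
    (hz₁ : ∫ x, (γ₁ x ^ 2 + 4 * γ₁ x) = 0) :
    ∀ t ∈ Set.Icc (0:ℝ) 1,
      (∫ x, (((1 - t) * γ₀ x + t * γ₁ x) ^ 2 + 4 * ((1 - t) * γ₀ x + t * γ₁ x)))
          = (t ^ 2 - t) * ∫ x, (γ₁ x - γ₀ x) ^ 2 ∧
      (∫ x, (((1 - t) * γ₀ x + t * γ₁ x) ^ 2 + 4 * ((1 - t) * γ₀ x + t * γ₁ x))) ≤ 0 := by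
  obtain ⟨h0a, h0b⟩ := aux_int γ₀ hγ₀c hγ₀ hint₀
  obtain ⟨h1a, h1b⟩ := aux_int γ₁ hγ₁c hγ₁ hint₁
  have hC : Integrable (fun x => (γ₁ x - γ₀ x) ^ 2) := by
    refine Integrable.mono' ((h0b.const_mul 2).add (h1b.const_mul 2))
      ((hγ₁c.sub hγ₀c).pow 2).aestronglyMeasurable ?_
    filter_upwards with x
    rw [Real.norm_eq_abs, abs_of_nonneg (sq_nonneg _)]
    simp only [Pi.add_apply]
    nlinarith [sq_nonneg (γ₁ x + γ₀ x)]
  intro t ht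
  obtain ⟨ht0, ht1⟩ := ht
  have key : ∀ x, ((1 - t) * γ₀ x + t * γ₁ x) ^ 2 + 4 * ((1 - t) * γ₀ x + t * γ₁ x)
      = (1 - t) * (γ₀ x ^ 2 + 4 * γ₀ x) + t * (γ₁ x ^ 2 + 4 * γ₁ x)
        + (t ^ 2 - t) * (γ₁ x - γ₀ x) ^ 2 := fun x => by ring
  have hi1 : Integrable (fun x => (1 - t) * (γ₀ x ^ 2 + 4 * γ₀ x)) := hint₀.const_mul _
  have hi2 : Integrable (fun x => t * (γ₁ x ^ 2 + 4 * γ₁ x)) := hint₁.const_mul _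
  have hi3 : Integrable (fun x => (t ^ 2 - t) * (γ₁ x - γ₀ x) ^ 2) := hC.const_mul _
  have heq : (∫ x, (((1 - t) * γ₀ x + t * γ₁ x) ^ 2 + 4 * ((1 - t) * γ₀ x + t * γ₁ x)))
      = (t ^ 2 - t) * ∫ x, (γ₁ x - γ₀ x) ^ 2 := by
    calc (∫ x, (((1 - t) * γ₀ x + t * γ₁ x) ^ 2 + 4 * ((1 - t) * γ₀ x + t * γ₁ x)))
        = ∫ x, ((1 - t) * (γ₀ x ^ 2 + 4 * γ₀ x) + t * (γ₁ x ^ 2 + 4 * γ₁ x)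
            + (t ^ 2 - t) * (γ₁ x - γ₀ x) ^ 2) := by
          exact congrArg _ (funext key)
      _ = (∫ x, ((1 - t) * (γ₀ x ^ 2 + 4 * γ₀ x) + t * (γ₁ x ^ 2 + 4 * γ₁ x)))
            + ∫ x, (t ^ 2 - t) * (γ₁ x - γ₀ x) ^ 2 := integral_add (hi1.add hi2) hi3
      _ = ((∫ x, (1 - t) * (γ₀ x ^ 2 + 4 * γ₀ x)) + ∫ x, t * (γ₁ x ^ 2 + 4 * γ₁ x))
            + ∫ x, (t ^ 2 - t) * (γ₁ x - γ₀ x) ^ 2 := by rw [integral_add hi1 hi2]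
      _ = (t ^ 2 - t) * ∫ x, (γ₁ x - γ₀ x) ^ 2 := by
          rw [integral_const_mul, integral_const_mul, integral_const_mul, hz₀, hz₁]
          ring
  refine ⟨heq, ?_⟩
  rw [heq]
  have h1 : t ^ 2 - t ≤ 0 := by nlinarith
  have h2 : (0:ℝ) ≤ ∫ x, (γ₁ x - γ₀ x) ^ 2 := integral_nonneg fun x => sq_nonneg _
  exact mul_nonpos_of_nonpos_of_nonneg h1 h2
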